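/- For all real numbers R, c, ε, ρ, θ > 0, all real σ, and all real μ ≠ 0, the 4×4 matrix M(ρ,θ,σ;μ) with rows (μ, ρ, 0, 0), (Rθ, ρμ, Rρ, 1), (−Rθμ, σ, ρcμ, 0), (εσμ/θ, 1 + ερσ/θ, −εσρμ/θ², ερμ/θ) is singular (has determinant zero) if and only if μ² = Rθ + θ/(ερ²) + (1/(ρ²c))·(R²ρ²θ + 2Rρσ + σ²/θ). -/

import Mathlib

/-- For `μ ≠ 0`, the characteristic matrix of Ruggeri's hyperbolic Navier–Stokes
system without heat conduction is singular iff
`μ² = Rθ + θ/(ερ²) + (R²ρ²θ + 2Rρσ + σ²/θ)/(ρ²c)`. -/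
theorem singular_iff_characteristic_speed
    (R c ε ρ θ : ℝ) (hR : 0 < R) (hc : 0 < c) (hε : 0 < ε) (hρ : 0 < ρ) (hθ : 0 < θ)
    (σ : ℝ) (μ : ℝ) (hμ : μ ≠ 0) :
    (Matrix.det !![μ, ρ, 0, 0;
                   R * θ, ρ * μ, R * ρ, 1;
                   -(R * θ) * μ, σ, ρ * c * μ, 0;
                   ε * σ * μ / θ, 1 + ε * ρ * σ / θ, -(ε * σ * ρ * μ) / θ ^ 2, ε * ρ * μ / θ]
      = 0)
      ↔ μ ^ 2 = R * θ + θ / (ε * ρ ^ 2)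
          + (1 / (ρ ^ 2 * c)) * (R ^ 2 * ρ ^ 2 * θ + 2 * R * ρ * σ + σ ^ 2 / θ) := by
  have hθ' : θ ≠ 0 := hθ.ne'
  have hρ' : ρ ≠ 0 := hρ.ne'
  have hε' : ε ≠ 0 := hε.ne'
  have hc' : c ≠ 0 := hc.ne'
  have key : Matrix.det !![μ, ρ, 0, 0;
                   R * θ, ρ * μ, R * ρ, 1;
                   -(R * θ) * μ, σ, ρ * c * μ, 0;
                   ε * σ * μ / θ, 1 + ε * ρ * σ / θ, -(ε * σ * ρ * μ) / θ ^ 2, ε * ρ * μ / θ]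
      = (ε * c * ρ ^ 3 / θ * μ ^ 2) *
        (μ ^ 2 - (R * θ + θ / (ε * ρ ^ 2)
          + (1 / (ρ ^ 2 * c)) * (R ^ 2 * ρ ^ 2 * θ + 2 * R * ρ * σ + σ ^ 2 / θ))) := by
    simp [Matrix.det_succ_row_zero, Fin.sum_univ_succ, Fin.succAbove]
    field_simp
    ring
  rw [key]
  have hA : ε * c * ρ ^ 3 / θ * μ ^ 2 ≠ 0 := by positivity
  rw [mul_eq_zero]
  constructor
  · rintro (h | h)
    · exact absurd h hA
    · linarith [sub_eq_zero.mp h]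
  · intro h
    right
    rw [sub_eq_zero]
    exact h
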